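/- Let d > 0, a, b ∈ ℝ, τ > 0, and g, f : ℝ → ℝ Lipschitz with constants G, F. If there exists α > 0 with -(d - α) + G|a| + F|b|e^{ατ} ≤ 0, then the autonomous delay equation u'(t) = -d·u(t) + a·g(u(t)) + b·f(u(t-τ)) + I (I constant) has at most one equilibrium point, and every solution converges to it exponentially with rate α if an equilibrium exists. -/

import Mathlib

/-- uniqueness of the equilibrium of the constant-coefficient
delay equation u' = -d u + a g(u) + b f(u(t-τ)) + I and its global exponential
stability with rate α. -/
theorem stmt7 (d a b Ic τ G F α : ℝ) (g f : ℝ → ℝ)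
    (hd : 0 < d) (hτ : 0 < τ)
    (hg : ∀ p q, |g p - g q| ≤ G * |p - q|)
    (hf : ∀ p q, |f p - f q| ≤ F * |p - q|)
    (hα : 0 < α)
    (hstab : -(d - α) + G * |a| + F * |b| * Real.exp (α * τ) ≤ 0) :
    (∀ e₁ e₂ : ℝ, -d * e₁ + a * g e₁ + b * f e₁ + Ic = 0 →
        -d * e₂ + a * g e₂ + b * f e₂ + Ic = 0 → e₁ = e₂) ∧
    (∀ e : ℝ, -d * e + a * g e + b * f e + Ic = 0 →
      ∀ u : ℝ → ℝ,
        (∀ t, HasDerivAt u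
          (-d * u t + a * g (u t) + b * f (u (t - τ)) + Ic) t) →
        ∀ B : ℝ, (∀ s ≤ (0 : ℝ), |u s - e| ≤ B) →
          ∀ t ≥ (0 : ℝ), |u t - e| ≤ B * Real.exp (-α * t)) := by
  have hG : 0 ≤ G := by
    have h := hg 0 1
    have h1 : |(0:ℝ) - 1| = 1 := by norm_num
    rw [h1, mul_one] at h
    exact le_trans (abs_nonneg _) h
  have hF : 0 ≤ F := by
    have h := hf 0 1
    have h1 : |(0:ℝ) - 1| = 1 := by norm_num
    rw [h1, mul_one] at h
    exact le_trans (abs_nonneg _) h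
  have hexpτ : (1:ℝ) ≤ Real.exp (α * τ) :=
    Real.one_le_exp (by positivity)
  have hc : G * |a| + F * |b| * Real.exp (α * τ) ≤ d - α := by linarith
  have hc0 : 0 ≤ G * |a| := mul_nonneg hG (abs_nonneg a)
  have hc1 : 0 ≤ F * |b| := mul_nonneg hF (abs_nonneg b)
  -- continuity of g and f
  have hgc : Continuous g := by
    have : LipschitzWith (Real.toNNReal G) g := by
      apply LipschitzWith.of_dist_le_mul
      intro x y
      simp only [Real.dist_eq]
      calc |g x - g y| ≤ G * |x - y| := hg x y
        _ ≤ (Real.toNNReal G : ℝ) * |x - y| := by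
            gcongr
            exact Real.le_coe_toNNReal G
    exact this.continuous
  have hfc : Continuous f := by
    have : LipschitzWith (Real.toNNReal F) f := by
      apply LipschitzWith.of_dist_le_mul
      intro x y
      simp only [Real.dist_eq]
      calc |f x - f y| ≤ F * |x - y| := hf x y
        _ ≤ (Real.toNNReal F : ℝ) * |x - y| := by
            gcongr
            exact Real.le_coe_toNNReal F
    exact this.continuous
  constructor
  · -- uniqueness of equilibrium
    intro e₁ e₂ h₁ h₂
    have hkey : d * |e₁ - e₂| ≤ (G * |a| + F * |b|) * |e₁ - e₂| := by
      have heq : d * (e₁ - e₂) = a * (g e₁ - g e₂) + b * (f e₁ - f e₂) := by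
        linarith
      calc d * |e₁ - e₂| = |d * (e₁ - e₂)| := by
            rw [abs_mul, abs_of_pos hd]
        _ = |a * (g e₁ - g e₂) + b * (f e₁ - f e₂)| := by rw [heq]
        _ ≤ |a * (g e₁ - g e₂)| + |b * (f e₁ - f e₂)| := abs_add_le _ _
        _ = |a| * |g e₁ - g e₂| + |b| * |f e₁ - f e₂| := by
            rw [abs_mul, abs_mul]
        _ ≤ |a| * (G * |e₁ - e₂|) + |b| * (F * |e₁ - e₂|) := by
            gcongr
            · exact hg e₁ e₂
            · exact hf e₁ e₂
        _ = (G * |a| + F * |b|) * |e₁ - e₂| := by ring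
    have hFb : F * |b| ≤ F * |b| * Real.exp (α * τ) := by nlinarith
    have hx : |e₁ - e₂| ≤ 0 := by nlinarith [abs_nonneg (e₁ - e₂)]
    have : |e₁ - e₂| = 0 := le_antisymm hx (abs_nonneg _)
    exact sub_eq_zero.mp (abs_eq_zero.mp this)
  · -- global exponential stability
    intro e he u hu B hB t ht
    have huc : Continuous u :=
      continuous_iff_continuousAt.mpr fun s => (hu s).continuousAt
    have hB0 : 0 ≤ B := le_trans (abs_nonneg _) (hB 0 le_rfl)
    set r : ℝ → ℝ := fun s => a * (g (u s) - g e) + b * (f (u (s - τ)) - f e)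
      with hr_def
    have hrc : Continuous r := by
      apply Continuous.add
      · exact continuous_const.mul ((hgc.comp huc).sub continuous_const)
      · exact continuous_const.mul
          ((hfc.comp (huc.comp (continuous_id.sub continuous_const))).sub
            continuous_const)
    have hψ : ∀ s, HasDerivAt (fun s => Real.exp (d * s) * (u s - e))
        (Real.exp (d * s) * r s) s := by
      intro s
      have h1 : HasDerivAt (fun s : ℝ => Real.exp (d * s))
          (Real.exp (d * s) * d) s := by
        simpa using ((hasDerivAt_id s).const_mul d).exp
      have h2 := (hu s).sub_const e
      have h3 := h1.mul h2
      refine h3.congr_deriv ?_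
      have hIc : Ic = d * e - a * g e - b * f e := by linarith
      simp only [hr_def, hIc]
      ring
    -- main claim, for every ε > 0
    have key : ∀ ε, 0 < ε → ∀ s, ¬ ((B + ε) * Real.exp (-α * s) ≤ |u s - e|) := by
      intro ε hε
      by_contra hcon
      push_neg at hcon
      set S : Set ℝ := {s | (B + ε) * Real.exp (-α * s) ≤ |u s - e|} with hS_def
      have hne : S.Nonempty := hcon
      have hSpos : ∀ s ∈ S, 0 < s := by
        intro s hs
        by_contra hle
        push_neg at hle
        have h1 : |u s - e| ≤ B := hB s hle
        have h2 : (1:ℝ) ≤ Real.exp (-α * s) :=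
          Real.one_le_exp (by nlinarith)
        have h3 : B + ε ≤ (B + ε) * Real.exp (-α * s) := by nlinarith
        have h4 : (B + ε) * Real.exp (-α * s) ≤ |u s - e| := hs
        linarith
      have hbdd : BddBelow S := ⟨0, fun s hs => (hSpos s hs).le⟩
      have hcont1 : Continuous fun s => (B + ε) * Real.exp (-α * s) :=
        continuous_const.mul (Real.continuous_exp.comp (continuous_const.mul continuous_id))
      have hcont2 : Continuous fun s => |u s - e| :=
        (huc.sub continuous_const).abs
      have hclosed : IsClosed S := isClosed_le hcont1 hcont2
      set T := sInf S with hT_def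
      have hTS : T ∈ S := hclosed.csInf_mem hne hbdd
      have hT0 : 0 < T := hSpos T hTS
      -- the bound holds for all s ≤ T
      have hle : ∀ s ≤ T, |u s - e| ≤ (B + ε) * Real.exp (-α * s) := by
        have hsub : Set.Iio T ⊆ {s | |u s - e| ≤ (B + ε) * Real.exp (-α * s)} := by
          intro s hs
          by_contra hcon2
          simp only [Set.mem_setOf_eq, not_le] at hcon2
          have hmem : s ∈ S := by
            simp only [hS_def, Set.mem_setOf_eq]
            exact le_of_lt hcon2
          exact absurd (csInf_le hbdd hmem) (not_le.mpr hs)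
        have hcl : IsClosed {s | |u s - e| ≤ (B + ε) * Real.exp (-α * s)} :=
          isClosed_le hcont2 hcont1
        intro s hs
        have : Set.Iic T ⊆ {s | |u s - e| ≤ (B + ε) * Real.exp (-α * s)} := by
          rw [← closure_Iio]
          exact hcl.closure_subset_iff.mpr hsub
        exact this hs
      -- FTC
      have hint1 : IntervalIntegrable (fun s => Real.exp (d * s) * r s)
          MeasureTheory.volume 0 T :=
        (Continuous.mul (Real.continuous_exp.comp (continuous_const.mul continuous_id)) hrc).intervalIntegrable 0 T
      have hFTC : ∫ s in (0:ℝ)..T, Real.exp (d * s) * r s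
          = Real.exp (d * T) * (u T - e) - Real.exp (d * 0) * (u 0 - e) :=
        intervalIntegral.integral_eq_sub_of_hasDerivAt (fun s _ => hψ s) hint1
      -- pointwise bound on the integrand
      have hpt : ∀ s ∈ Set.Icc (0:ℝ) T,
          |Real.exp (d * s) * r s| ≤ (B + ε) * (d - α) * Real.exp ((d - α) * s) := by
        intro s hs
        have hsT : s ≤ T := hs.2
        have h1 : |u s - e| ≤ (B + ε) * Real.exp (-α * s) := hle s hsT
        have h2 : |u (s - τ) - e| ≤ (B + ε) * Real.exp (-α * (s - τ)) :=
          hle (s - τ) (by linarith)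
        have hrs : |r s| ≤ (B + ε) * (G * |a| + F * |b| * Real.exp (α * τ))
            * Real.exp (-α * s) := by
          have hga : |g (u s) - g e| ≤ G * |u s - e| := hg _ _
          have hfa : |f (u (s - τ)) - f e| ≤ F * |u (s - τ) - e| := hf _ _
          have e1 : Real.exp (-α * (s - τ)) = Real.exp (α * τ) * Real.exp (-α * s) := by
            rw [← Real.exp_add]; ring_nf
          calc |r s| ≤ |a * (g (u s) - g e)| + |b * (f (u (s - τ)) - f e)| :=
                abs_add_le _ _
            _ = |a| * |g (u s) - g e| + |b| * |f (u (s - τ)) - f e| := by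
                rw [abs_mul, abs_mul]
            _ ≤ |a| * (G * |u s - e|) + |b| * (F * |u (s - τ) - e|) := by
                gcongr
            _ ≤ |a| * (G * ((B + ε) * Real.exp (-α * s)))
                + |b| * (F * ((B + ε) * Real.exp (-α * (s - τ)))) := by
                gcongr
            _ = (B + ε) * (G * |a| + F * |b| * Real.exp (α * τ))
                * Real.exp (-α * s) := by
                rw [e1]; ring
        have hBε : 0 ≤ B + ε := by linarith
        have e2 : Real.exp (d * s) * Real.exp (-α * s) = Real.exp ((d - α) * s) := by
          rw [← Real.exp_add]; ring_nf
        calc |Real.exp (d * s) * r s| = Real.exp (d * s) * |r s| := by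
              rw [abs_mul, abs_of_pos (Real.exp_pos _)]
          _ ≤ Real.exp (d * s) * ((B + ε) * (G * |a| + F * |b| * Real.exp (α * τ))
              * Real.exp (-α * s)) := by
              gcongr
          _ = (B + ε) * (G * |a| + F * |b| * Real.exp (α * τ))
              * Real.exp ((d - α) * s) := by rw [← e2]; ring
          _ ≤ (B + ε) * (d - α) * Real.exp ((d - α) * s) := by
              gcongr
      -- value of the comparison integral
      have hint2 : IntervalIntegrable
          (fun s => (B + ε) * (d - α) * Real.exp ((d - α) * s))
          MeasureTheory.volume 0 T := by
        exact (continuous_const.mul (Real.continuous_exp.comp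
          (continuous_const.mul continuous_id))).intervalIntegrable 0 T
      have hrhs : ∫ s in (0:ℝ)..T, (B + ε) * (d - α) * Real.exp ((d - α) * s)
          = (B + ε) * Real.exp ((d - α) * T) - (B + ε) := by
        have hd2 : ∀ s, HasDerivAt (fun s => (B + ε) * Real.exp ((d - α) * s))
            ((B + ε) * (d - α) * Real.exp ((d - α) * s)) s := by
          intro s
          have h1 : HasDerivAt (fun s : ℝ => Real.exp ((d - α) * s))
              (Real.exp ((d - α) * s) * (d - α)) s := by
            simpa using ((hasDerivAt_id s).const_mul (d - α)).exp
          have h2 := h1.const_mul (B + ε)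
          refine h2.congr_deriv ?_
          ring
        rw [intervalIntegral.integral_eq_sub_of_hasDerivAt (fun s _ => hd2 s) hint2]
        simp [Real.exp_zero]
      -- put everything together
      have habs : |Real.exp (d * T) * (u T - e) - Real.exp (d * 0) * (u 0 - e)|
          ≤ (B + ε) * Real.exp ((d - α) * T) - (B + ε) := by
        rw [← hFTC, ← hrhs]
        calc |∫ s in (0:ℝ)..T, Real.exp (d * s) * r s|
            ≤ ∫ s in (0:ℝ)..T, |Real.exp (d * s) * r s| :=
              intervalIntegral.abs_integral_le_integral_abs hT0.le
          _ ≤ ∫ s in (0:ℝ)..T, (B + ε) * (d - α) * Real.exp ((d - α) * s) :=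
              intervalIntegral.integral_mono_on hT0.le hint1.abs hint2 hpt
      have hψT : (B + ε) * Real.exp ((d - α) * T) ≤ Real.exp (d * T) * |u T - e| := by
        have e3 : Real.exp (d * T) * Real.exp (-α * T) = Real.exp ((d - α) * T) := by
          rw [← Real.exp_add]; ring_nf
        have := hTS
        have h4 : (B + ε) * Real.exp (-α * T) ≤ |u T - e| := this
        nlinarith [Real.exp_pos (d * T)]
      have hψ0 : |u 0 - e| ≤ B := hB 0 le_rfl
      have h5 : Real.exp (d * T) * |u T - e| - |u 0 - e|
          ≤ |Real.exp (d * T) * (u T - e) - Real.exp (d * 0) * (u 0 - e)| := by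
        have := abs_sub_abs_le_abs_sub (Real.exp (d * T) * (u T - e))
          (Real.exp (d * 0) * (u 0 - e))
        rw [abs_mul, abs_mul, abs_of_pos (Real.exp_pos (d * T)),
          abs_of_pos (Real.exp_pos (d * 0))] at this
        simp only [mul_zero, Real.exp_zero, one_mul] at this ⊢
        linarith
      linarith
    -- pass to the limit ε → 0
    have hfin : ∀ ε, 0 < ε → |u t - e| ≤ (B + ε) * Real.exp (-α * t) :=
      fun ε hε => le_of_lt (not_le.mp (key ε hε t))
    have hexp1 : Real.exp (-α * t) * Real.exp (α * t) = 1 := by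
      rw [← Real.exp_add]; ring_nf; exact Real.exp_zero
    have h2 : |u t - e| * Real.exp (α * t) ≤ B := by
      refine le_of_forall_pos_le_add fun ε hε => ?_
      have h3 := hfin ε hε
      nlinarith [Real.exp_pos (α * t), Real.exp_pos (-α * t)]
    nlinarith [Real.exp_pos (α * t), Real.exp_pos (-α * t), h2]
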